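/- There exists a family of functions e_α : α → ω, indexed by ordinals α with ω ≤ α < ω₁, such that (1) each e_α is injective, and (2) for all β with ω ≤ β < α < ω₁, the set {ξ < β : e_α(ξ) ≠ e_β(ξ)} is finite. -/

import Mathlib

open Classical in
/-- Invariant for the finite-stage approximations in the limit amalgamation. -/
def KInv {X : Type*} (S : ℕ → Set X) (f : ℕ → X → ℕ) (n : ℕ) (h : X → ℕ) (B : Finset ℕ) :
    Prop :=
  Set.InjOn h (S n) ∧ {x | x ∈ S n ∧ h x ≠ f n x}.Finite ∧
    (∀ b ∈ B, ∀ x ∈ S n, h x ≠ b) ∧ n ≤ B.card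

lemma kstep {X : Type*} {S : ℕ → Set X} {f : ℕ → X → ℕ}
    (hmono : Monotone S)
    (hinj : ∀ n, Set.InjOn (f n) (S n))
    (hcoinf : ∀ n, ((f n '' S n)ᶜ).Infinite)
    (hcoh : ∀ m n, m ≤ n → {x | x ∈ S m ∧ f n x ≠ f m x}.Finite)
    {n : ℕ} {h : X → ℕ} {B : Finset ℕ} (hI : KInv S f n h B) :
    ∃ q : (X → ℕ) × Finset ℕ, KInv S f (n+1) q.1 q.2 ∧
      (∀ x ∈ S n, q.1 x = h x) ∧ B ⊆ q.2 := by
  classical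
  obtain ⟨hInj, hFin, hB, hcard⟩ := hI
  set D : Set X := {x | x ∈ S n ∧ f (n+1) x ≠ h x} with hDdef
  have hDfin : D.Finite := by
    apply Set.Finite.subset (hFin.union (hcoh n (n+1) (Nat.le_succ n)))
    rintro x ⟨hx, hne⟩
    by_cases hfx : h x = f n x
    · exact Or.inr ⟨hx, fun hc => hne (hc.trans hfx.symm)⟩
    · exact Or.inl ⟨hx, hfx⟩
  set VD : Set ℕ := (h '' D) ∪ ↑B with hVDdef
  have hVDfin : VD.Finite := (hDfin.image h).union B.finite_toSet
  set Bad : Set X := {x | x ∈ S (n+1) ∧ x ∉ S n ∧ f (n+1) x ∈ VD} with hBaddef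
  have hBadfin : Bad.Finite := by
    apply Set.Finite.of_finite_image
      (hVDfin.subset ?_) ((hinj (n+1)).mono ?_)
    · rintro y ⟨x, ⟨_, _, hx3⟩, rfl⟩; exact hx3
    · rintro x ⟨hx1, _, _⟩; exact hx1
  set Pool : Set ℕ := ((f (n+1) '' S (n+1))ᶜ) \ (h '' S n ∪ ↑B) with hPooldef
  have hPoolInf : Pool.Infinite := by
    have key : ((f (n+1) '' S (n+1))ᶜ \ ((h '' D) ∪ ↑B)) ⊆ Pool := by
      rintro y ⟨hy1, hy2⟩
      refine ⟨hy1, ?_⟩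
      rintro (⟨x, hx, rfl⟩ | hyB)
      · by_cases hd : x ∈ D
        · exact hy2 (Or.inl ⟨x, hd, rfl⟩)
        · have hfe : f (n+1) x = h x := by
            by_contra hne; exact hd ⟨hx, hne⟩
          exact hy1 ⟨x, hmono (Nat.le_succ n) hx, hfe⟩
      · exact hy2 (Or.inr hyB)
    exact (((hcoinf (n+1)).diff ((hDfin.image h).union B.finite_toSet))).mono key
  obtain ⟨j, hj⟩ : ∃ j : ↥Bad → ℕ, Function.Injective j :=
    Set.countable_iff_exists_injective.mp hBadfin.countable
  set emb := hPoolInf.natEmbedding with hembdef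
  set corr : X → ℕ := fun x => if hx : x ∈ Bad then (emb (j ⟨x, hx⟩) : ℕ) else 0 with hcorrdef
  have hcorrPool : ∀ x ∈ Bad, corr x ∈ Pool := by
    intro x hx
    simp only [hcorrdef, dif_pos hx]
    exact (emb (j ⟨x, hx⟩)).2
  have hcorrInj : Set.InjOn corr Bad := by
    intro x hx y hy hxy
    simp only [hcorrdef, dif_pos hx, dif_pos hy] at hxy
    have h1 : emb (j ⟨x, hx⟩) = emb (j ⟨y, hy⟩) := Subtype.ext hxy
    have h2 := hj (emb.injective h1)
    exact congrArg Subtype.val h2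
  obtain ⟨bnew, hbnewPool, hbnewCorr⟩ : ∃ b, b ∈ Pool ∧ b ∉ corr '' Bad := by
    obtain ⟨b, hb1, hb2⟩ := (hPoolInf.diff (hBadfin.image corr)).nonempty
    exact ⟨b, hb1, hb2⟩
  set h' : X → ℕ := fun x => if x ∈ S n then h x else if x ∈ Bad then corr x else f (n+1) x
    with hh'def
  have hval1 : ∀ x ∈ S n, h' x = h x := fun x hx => if_pos hx
  have hval2 : ∀ x ∈ Bad, h' x = corr x := by
    intro x hx
    have hnx : x ∉ S n := hx.2.1
    simp only [hh'def, if_neg hnx, if_pos hx]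
  have hval3 : ∀ x, x ∉ S n → x ∉ Bad → h' x = f (n+1) x := by
    intro x hx1 hx2
    simp only [hh'def, if_neg hx1, if_neg hx2]
  have hPool1 : ∀ y ∈ Pool, y ∉ h '' S n := fun y hy hc => hy.2 (Or.inl hc)
  have hPool2 : ∀ y ∈ Pool, y ∉ f (n+1) '' S (n+1) := fun y hy => hy.1
  have hPool3 : ∀ y ∈ Pool, y ∉ B := fun y hy hc => hy.2 (Or.inr hc)
  -- auxiliary injectivity: one point in `S n`
  have aux1 : ∀ x ∈ S (n+1), ∀ y ∈ S (n+1), x ∈ S n → h' x = h' y → x = y := by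
    intro x hx y hy hxS heq
    rw [hval1 x hxS] at heq
    by_cases hyS : y ∈ S n
    · rw [hval1 y hyS] at heq; exact hInj hxS hyS heq
    · by_cases hyB : y ∈ Bad
      · rw [hval2 y hyB] at heq
        exact absurd ⟨x, hxS, heq⟩ (hPool1 _ (hcorrPool y hyB))
      · rw [hval3 y hyS hyB] at heq
        by_cases hxD : x ∈ D
        · exact absurd (Or.inl ⟨x, hxD, heq⟩) (fun hc => hyB ⟨hy, hyS, hc⟩)
        · have hfe : f (n+1) x = h x := by
            by_contra hne; exact hxD ⟨hxS, hne⟩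
          exact hinj (n+1) (hmono (Nat.le_succ n) hxS) hy (hfe.trans heq)
  have hInj' : Set.InjOn h' (S (n+1)) := by
    intro x hx y hy heq
    by_cases hxS : x ∈ S n
    · exact aux1 x hx y hy hxS heq
    · by_cases hyS : y ∈ S n
      · exact (aux1 y hy x hx hyS heq.symm).symm
      · by_cases hxB : x ∈ Bad
        · by_cases hyB : y ∈ Bad
          · rw [hval2 x hxB, hval2 y hyB] at heq; exact hcorrInj hxB hyB heq
          · rw [hval2 x hxB, hval3 y hyS hyB] at heq
            exact absurd ⟨y, hy, heq.symm⟩ (hPool2 _ (hcorrPool x hxB))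
        · by_cases hyB : y ∈ Bad
          · rw [hval3 x hxS hxB, hval2 y hyB] at heq
            exact absurd ⟨x, hx, heq⟩ (hPool2 _ (hcorrPool y hyB))
          · rw [hval3 x hxS hxB, hval3 y hyS hyB] at heq
            exact hinj (n+1) hx hy heq
  refine ⟨(h', insert bnew B), ⟨hInj', ?_, ?_, ?_⟩, hval1, Finset.subset_insert _ _⟩
  · -- finiteness of difference with f (n+1)
    apply Set.Finite.subset (hDfin.union hBadfin)
    rintro x ⟨hx, hne⟩
    replace hne : h' x ≠ f (n+1) x := hne
    by_cases hxS : x ∈ S n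
    · rw [hval1 x hxS] at hne
      exact Or.inl ⟨hxS, fun hc => hne hc.symm⟩
    · by_cases hxB : x ∈ Bad
      · exact Or.inr hxB
      · exact absurd (hval3 x hxS hxB) hne
  · -- avoided values
    intro b hb x hx heq
    replace heq : h' x = b := heq
    replace hb : b ∈ insert bnew B := hb
    rcases Finset.mem_insert.mp hb with rfl | hbB
    · by_cases hxS : x ∈ S n
      · rw [hval1 x hxS] at heq
        exact hPool1 _ hbnewPool ⟨x, hxS, heq⟩
      · by_cases hxB : x ∈ Bad
        · rw [hval2 x hxB] at heq
          exact hbnewCorr ⟨x, hxB, heq⟩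
        · rw [hval3 x hxS hxB] at heq
          exact hPool2 _ hbnewPool ⟨x, hx, heq⟩
    · by_cases hxS : x ∈ S n
      · rw [hval1 x hxS] at heq
        exact hB b hbB x hxS heq
      · by_cases hxB : x ∈ Bad
        · rw [hval2 x hxB] at heq
          exact hPool3 _ (hcorrPool x hxB) (heq ▸ hbB)
        · rw [hval3 x hxS hxB] at heq
          exact hxB ⟨hx, hxS, Or.inr (heq ▸ hbB)⟩
  · rw [Finset.card_insert_of_notMem (hPool3 _ hbnewPool)]
    omega

open Classical in
/-- The recursively constructed sequence of approximations. -/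
noncomputable def kseq {X : Type*} (S : ℕ → Set X) (f : ℕ → X → ℕ) :
    ℕ → (X → ℕ) × Finset ℕ
  | 0 => (f 0, ∅)
  | n+1 =>
    if hq : ∃ q : (X → ℕ) × Finset ℕ, KInv S f (n+1) q.1 q.2 ∧
        (∀ x ∈ S n, q.1 x = (kseq S f n).1 x) ∧ (kseq S f n).2 ⊆ q.2 then
      hq.choose
    else kseq S f n

section kprops

variable {X : Type*} {S : ℕ → Set X} {f : ℕ → X → ℕ}
  (hmono : Monotone S)
  (hinj : ∀ n, Set.InjOn (f n) (S n))
  (hcoinf : ∀ n, ((f n '' S n)ᶜ).Infinite)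
  (hcoh : ∀ m n, m ≤ n → {x | x ∈ S m ∧ f n x ≠ f m x}.Finite)

include hmono hinj hcoinf hcoh

omit hmono hinj hcoinf hcoh in
lemma kseq_succ_eq {n : ℕ}
    (hex : ∃ q : (X → ℕ) × Finset ℕ, KInv S f (n+1) q.1 q.2 ∧
      (∀ x ∈ S n, q.1 x = (kseq S f n).1 x) ∧ (kseq S f n).2 ⊆ q.2) :
    kseq S f (n+1) = hex.choose := by
  rw [kseq, dif_pos hex]

omit hmono hinj hcoinf hcoh in
lemma kseq_zero_eq : kseq S f 0 = (f 0, ∅) := rfl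

lemma kseq_prop : ∀ n, KInv S f n (kseq S f n).1 (kseq S f n).2 ∧
    (∀ x ∈ S n, (kseq S f (n+1)).1 x = (kseq S f n).1 x) ∧
    (kseq S f n).2 ⊆ (kseq S f (n+1)).2 := by
  have inv : ∀ n, KInv S f n (kseq S f n).1 (kseq S f n).2 := by
    intro n
    induction n with
    | zero =>
      rw [kseq_zero_eq]
      refine ⟨hinj 0, ?_, by simp, by simp⟩
      have : {x | x ∈ S 0 ∧ f 0 x ≠ f 0 x} = ∅ := by ext x; simp
      rw [this]; exact Set.finite_empty
    | succ n ih =>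
      have hex := kstep hmono hinj hcoinf hcoh ih
      rw [kseq_succ_eq hex]
      exact hex.choose_spec.1
  intro n
  have hex := kstep hmono hinj hcoinf hcoh (inv n)
  have he := kseq_succ_eq hex
  refine ⟨inv n, ?_, ?_⟩
  · rw [he]; exact hex.choose_spec.2.1
  · rw [he]; exact hex.choose_spec.2.2

lemma kseq_agree2 : ∀ n m, n ≤ m → ∀ x ∈ S n, (kseq S f m).1 x = (kseq S f n).1 x := by
  intro n m hnm
  induction hnm with
  | refl => intro x _; rfl
  | @step m' hm' ih =>
    intro x hx
    have := (kseq_prop hmono hinj hcoinf hcoh m').2.1 x (hmono hm' hx)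
    rw [this]; exact ih x hx

lemma kseq_bsub : ∀ n m, n ≤ m → (kseq S f n).2 ⊆ (kseq S f m).2 := by
  intro n m hnm
  induction hnm with
  | refl => exact fun b hb => hb
  | @step m' hm' ih =>
    exact fun b hb => (kseq_prop hmono hinj hcoinf hcoh m').2.2 (ih hb)

open Classical in
lemma kmain :
    ∃ g : X → ℕ, Set.InjOn g (⋃ n, S n) ∧ ((g '' ⋃ n, S n)ᶜ).Infinite ∧
      ∀ n, {x | x ∈ S n ∧ g x ≠ f n x}.Finite := by
  set g : X → ℕ := fun x =>
    if hx : ∃ n, x ∈ S n then (kseq S f (Nat.find hx)).1 x else 0 with hgdef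
  have hval : ∀ n, ∀ x ∈ S n, g x = (kseq S f n).1 x := by
    intro n x hx
    have hex : ∃ k, x ∈ S k := ⟨n, hx⟩
    have h1 : Nat.find hex ≤ n := Nat.find_min' hex hx
    simp only [hgdef, dif_pos hex]
    exact (kseq_agree2 hmono hinj hcoinf hcoh (Nat.find hex) n h1 x (Nat.find_spec hex)).symm
  refine ⟨g, ?_, ?_, ?_⟩
  · intro x hxU y hyU heq
    obtain ⟨nx, hx⟩ := Set.mem_iUnion.mp hxU
    obtain ⟨ny, hy⟩ := Set.mem_iUnion.mp hyU
    have hx' : x ∈ S (max nx ny) := hmono (le_max_left _ _) hx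
    have hy' : y ∈ S (max nx ny) := hmono (le_max_right _ _) hy
    rw [hval _ x hx', hval _ y hy'] at heq
    exact (kseq_prop hmono hinj hcoinf hcoh (max nx ny)).1.1 hx' hy' heq
  · have hsub : (⋃ n, ((kseq S f n).2 : Set ℕ)) ⊆ (g '' ⋃ n, S n)ᶜ := by
      rintro b hb ⟨x, hxU, hgx⟩
      obtain ⟨k, hk⟩ := Set.mem_iUnion.mp hb
      obtain ⟨nx, hx⟩ := Set.mem_iUnion.mp hxU
      have hx' : x ∈ S (max k nx) := hmono (le_max_right _ _) hx
      have hb' : b ∈ (kseq S f (max k nx)).2 :=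
        kseq_bsub hmono hinj hcoinf hcoh k _ (le_max_left _ _) hk
      have := (kseq_prop hmono hinj hcoinf hcoh (max k nx)).1.2.2.1 b hb' x hx'
      rw [hval _ x hx'] at hgx
      exact this hgx
    have hinfB : (⋃ n, ((kseq S f n).2 : Set ℕ)).Infinite := by
      intro hfin
      have hcard : ∀ n : ℕ, n ≤ hfin.toFinset.card := by
        intro n
        have h1 : n ≤ (kseq S f n).2.card := (kseq_prop hmono hinj hcoinf hcoh n).1.2.2.2
        have h2 : (kseq S f n).2 ⊆ hfin.toFinset := by
          intro b hb
          rw [Set.Finite.mem_toFinset]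
          exact Set.mem_iUnion.mpr ⟨n, hb⟩
        exact le_trans h1 (Finset.card_le_card h2)
      exact absurd (hcard (hfin.toFinset.card + 1)) (by omega)
    exact hinfB.mono hsub
  · intro n
    apply Set.Finite.subset (kseq_prop hmono hinj hcoinf hcoh n).1.2.1
    rintro x ⟨hx, hne⟩
    refine ⟨hx, ?_⟩
    rw [← hval n x hx]
    exact hne

end kprops

open Classical in
/-- Recursion body: choose a good extension if one exists. -/
noncomputable def OrdBody (α : Ordinal) (IH : ∀ β, β < α → Ordinal → ℕ) : Ordinal → ℕ :=
  if h : ∃ g : Ordinal → ℕ, Set.InjOn g (Set.Iio α) ∧ ((g '' Set.Iio α)ᶜ).Infinite ∧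
      ∀ β, ∀ hβ : β < α, {ξ | ξ < β ∧ g ξ ≠ IH β hβ ξ}.Finite
  then h.choose else fun _ => 0

noncomputable def OrdE : Ordinal → Ordinal → ℕ :=
  Ordinal.lt_wf.fix OrdBody

lemma OrdE_eq (α : Ordinal) : OrdE α = OrdBody α (fun β _ => OrdE β) :=
  Ordinal.lt_wf.fix_eq OrdBody α

/-- The main invariant. -/
def OrdGood (α : Ordinal) : Prop :=
  Set.InjOn (OrdE α) (Set.Iio α) ∧ ((OrdE α '' Set.Iio α)ᶜ).Infinite ∧
    ∀ β, β < α → {ξ | ξ < β ∧ OrdE α ξ ≠ OrdE β ξ}.Finite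

lemma ordGood_of_ex {α : Ordinal}
    (hex : ∃ g : Ordinal → ℕ, Set.InjOn g (Set.Iio α) ∧ ((g '' Set.Iio α)ᶜ).Infinite ∧
      ∀ β, ∀ hβ : β < α, {ξ | ξ < β ∧ g ξ ≠ OrdE β ξ}.Finite) : OrdGood α := by
  have heq : OrdE α = OrdBody α (fun β _ => OrdE β) := OrdE_eq α
  rw [OrdBody, dif_pos hex] at heq
  obtain ⟨h1, h2, h3⟩ := hex.choose_spec
  rw [OrdGood, heq]
  exact ⟨h1, h2, fun β hβ => h3 β hβ⟩

lemma ordGood_main : ∀ α : Ordinal, α < (Cardinal.aleph 1).ord → OrdGood α := by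
  intro α
  induction α using Ordinal.induction with
  | h α IH =>
    intro hα
    rcases Ordinal.zero_or_succ_or_isSuccLimit α with rfl | ⟨β, rfl⟩ | hlim
    · -- zero case
      apply ordGood_of_ex
      refine ⟨fun _ => 0, ?_, ?_, ?_⟩
      · intro x hx; exact absurd hx (not_lt_of_ge (zero_le (a := x)))
      · have : Set.Iio (0 : Ordinal) = ∅ := by
          ext x; simp [not_lt_of_ge (zero_le (a := x))]
        rw [this]
        simp only [Set.image_empty, Set.compl_empty]
        exact Set.infinite_univ
      · intro β hβ; exact absurd hβ (not_lt_of_ge (zero_le (a := β)))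
    · -- successor case
      have hβlt : β < Order.succ β := Order.lt_succ β
      have hβα : β < (Cardinal.aleph 1).ord := lt_trans hβlt hα
      have hG := IH β hβlt hβα
      obtain ⟨hGinj, hGinf, hGcoh⟩ := hG
      obtain ⟨fresh, hfresh⟩ := hGinf.nonempty
      apply ordGood_of_ex
      classical
      refine ⟨fun ξ => if ξ < β then OrdE β ξ else fresh, ?_, ?_, ?_⟩
      · intro x hx y hy heq
        simp only at heq
        by_cases hxb : x < β
        · by_cases hyb : y < β
          · rw [if_pos hxb, if_pos hyb] at heq
            exact hGinj hxb hyb heq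
          · rw [if_pos hxb, if_neg hyb] at heq
            exact absurd ⟨x, hxb, heq⟩ hfresh
        · by_cases hyb : y < β
          · rw [if_neg hxb, if_pos hyb] at heq
            exact absurd ⟨y, hyb, heq.symm⟩ hfresh
          · have hx' : x = β := le_antisymm (Order.lt_succ_iff.mp hx) (not_lt.mp hxb)
            have hy' : y = β := le_antisymm (Order.lt_succ_iff.mp hy) (not_lt.mp hyb)
            rw [hx', hy']
      · refine (hGinf.diff (Set.finite_singleton fresh)).mono ?_
        rintro y ⟨hy1, hy2⟩ ⟨x, hx, hxy⟩
        replace hxy : (if x < β then OrdE β x else fresh) = y := hxy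
        by_cases hxb : x < β
        · rw [if_pos hxb] at hxy
          exact hy1 ⟨x, hxb, hxy⟩
        · rw [if_neg hxb] at hxy
          exact hy2 hxy.symm
      · intro γ hγ
        have hγβ : γ ≤ β := Order.lt_succ_iff.mp hγ
        rcases eq_or_lt_of_le hγβ with rfl | hγβ'
        · have : {ξ | ξ < γ ∧ (if ξ < γ then OrdE γ ξ else fresh) ≠ OrdE γ ξ} = ∅ := by
            ext ξ
            simp only [Set.mem_setOf_eq, Set.mem_empty_iff_false, iff_false, not_and]
            intro hξ
            rw [if_pos hξ]
            simp
          rw [this]; exact Set.finite_empty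
        · apply Set.Finite.subset (hGcoh γ hγβ')
          rintro ξ ⟨hξ, hne⟩
          replace hne : (if ξ < β then OrdE β ξ else fresh) ≠ OrdE γ ξ := hne
          rw [if_pos (lt_trans hξ hγβ')] at hne
          exact ⟨hξ, hne⟩
    · -- limit case
      -- a surjective enumeration of Iio α
      have hcard : α.card < Cardinal.aleph 1 := Cardinal.lt_ord.mp hα
      have hctble : (Set.Iio α).Countable := by
        rw [Cardinal.countable_iff_lt_aleph_one, Ordinal.mk_Iio_ordinal]
        exact Cardinal.lift_lt_aleph_one.mpr hcard
      haveI : Countable ↥(Set.Iio α) := hctble.to_subtype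
      haveI : Nonempty ↥(Set.Iio α) := ⟨⟨0, hlim.pos⟩⟩
      obtain ⟨q, hq⟩ := exists_surjective_nat ↥(Set.Iio α)
      -- a strictly increasing cofinal sequence
      set s : ℕ → Ordinal :=
        fun n => Nat.rec ((q 0).1 + 1) (fun k sk => max (sk + 1) ((q (k+1)).1 + 1)) n with hsdef
      have hs0 : s 0 = (q 0).1 + 1 := rfl
      have hssucc : ∀ n, s (n+1) = max (s n + 1) ((q (n+1)).1 + 1) := fun n => rfl
      have hslt : ∀ n, s n < α := by
        intro n
        induction n with
        | zero =>
          rw [hs0, Ordinal.add_one_eq_succ]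
          exact hlim.succ_lt (q 0).2
        | succ n ih =>
          rw [hssucc n]
          apply max_lt
          · rw [Ordinal.add_one_eq_succ]; exact hlim.succ_lt ih
          · rw [Ordinal.add_one_eq_succ]; exact hlim.succ_lt (q (n+1)).2
      have hsmono : StrictMono s := by
        apply strictMono_nat_of_lt_succ
        intro n
        rw [hssucc n]
        calc s n < s n + 1 := by
              rw [Ordinal.add_one_eq_succ]; exact Order.lt_succ _
          _ ≤ _ := le_max_left _ _
      have hcov : ∀ ξ, ξ < α → ∃ n, ξ < s n := by
        intro ξ hξ
        obtain ⟨m, hm⟩ := hq ⟨ξ, hξ⟩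
        rcases m with _ | m
        · refine ⟨0, ?_⟩
          have hqv : (q 0).1 = ξ := by rw [hm]
          rw [hs0, hqv, Ordinal.add_one_eq_succ]
          exact Order.lt_succ _
        · refine ⟨m + 1, ?_⟩
          rw [hssucc m]
          have hqv : (q (m+1)).1 = ξ := by rw [hm]
          have : ξ < (q (m+1)).1 + 1 := by
            rw [hqv, Ordinal.add_one_eq_succ]
            exact Order.lt_succ _
          exact lt_of_lt_of_le this (le_max_right _ _)
      -- apply the amalgamation lemma
      have hGs : ∀ n, OrdGood (s n) := fun n =>
        IH (s n) (hslt n) (lt_trans (hslt n) hα)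
      have hmono : Monotone (fun n => Set.Iio (s n)) := by
        intro n m hnm
        exact Set.Iio_subset_Iio (hsmono.monotone hnm)
      have hinj : ∀ n, Set.InjOn (OrdE (s n)) (Set.Iio (s n)) := fun n => (hGs n).1
      have hcoinf : ∀ n, ((OrdE (s n) '' Set.Iio (s n))ᶜ).Infinite := fun n => (hGs n).2.1
      have hcoh : ∀ m n, m ≤ n →
          {x | x ∈ Set.Iio (s m) ∧ OrdE (s n) x ≠ OrdE (s m) x}.Finite := by
        intro m n hmn
        rcases Nat.eq_or_lt_of_le hmn with rfl | hlt
        · have : {x | x ∈ Set.Iio (s m) ∧ OrdE (s m) x ≠ OrdE (s m) x} = ∅ := by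
            ext x; simp
          rw [this]; exact Set.finite_empty
        · exact ((hGs n).2.2 (s m) (hsmono hlt))
      obtain ⟨g, hg1, hg2, hg3⟩ :=
        kmain hmono hinj hcoinf hcoh (f := fun n => OrdE (s n))
      have hU : (⋃ n, Set.Iio (s n)) = Set.Iio α := by
        ext ξ
        simp only [Set.mem_iUnion, Set.mem_Iio]
        exact ⟨fun ⟨n, hn⟩ => lt_trans hn (hslt n), hcov ξ⟩
      rw [hU] at hg1 hg2
      apply ordGood_of_ex
      refine ⟨g, hg1, hg2, ?_⟩
      intro β hβ
      obtain ⟨n, hn⟩ := hcov β hβ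
      apply Set.Finite.subset ((hg3 n).union ((hGs n).2.2 β hn))
      rintro ξ ⟨hξβ, hne⟩
      by_cases hc : g ξ = OrdE (s n) ξ
      · exact Or.inr ⟨hξβ, fun hc2 => hne (hc.trans hc2)⟩
      · exact Or.inl ⟨lt_trans hξβ hn, hc⟩


/-- There exists an almost-coherent sequence of injections: a family of functions
`e α : α → ω` for ordinals `ω ≤ α < ω₁` such that each `e α` is injective and any
two members of the family agree on all but finitely many points of their common
domain. -/
theorem exists_almost_coherent_sequence :
    ∃ e : (α : Ordinal) → Set.Iio α → ℕ,
      ∀ α : Ordinal, Ordinal.omega0 ≤ α → α < (Cardinal.aleph 1).ord →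
        Function.Injective (e α) ∧
        ∀ β : Ordinal, Ordinal.omega0 ≤ β → ∀ h : β < α,
          {ξ : Set.Iio β | e α ⟨ξ.1, lt_trans ξ.2 h⟩ ≠ e β ξ}.Finite := by
  refine ⟨fun α ξ => OrdE α ξ.1, ?_⟩
  intro α _ hα
  obtain ⟨hGinj, _, hGcoh⟩ := ordGood_main α hα
  constructor
  · intro ξ η heq
    exact Subtype.ext (hGinj ξ.2 η.2 heq)
  · intro β _ hβα
    have hfin := hGcoh β hβα
    have hsub : {ξ : Set.Iio β | OrdE α ξ.1 ≠ OrdE β ξ.1} ⊆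
        Subtype.val ⁻¹' {ξ | ξ < β ∧ OrdE α ξ ≠ OrdE β ξ} := by
      intro x hx
      exact ⟨x.2, hx⟩
    exact Set.Finite.subset (hfin.preimage (Subtype.val_injective.injOn)) hsub
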